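/- Let S be a finite species set, let C ⊆ ℝ^S be a finite set of complexes, and let R ⊆ C × C be a finite reaction set with (y, y) ∉ R for all y. Suppose R is weakly reversible and suppose that for every decomposition {R_1, …, R_k} of R the deficiency is additive: δ(R) = δ(R_1) + … + δ(R_k). Then every independent decomposition of R is weakly reversible, i.e., for every independent decomposition {R_1, …, R_k} of R, each R_i is a weakly reversible subset of reactions. -/

import Mathlib

/-- A set `E` of reactions is weakly reversible if for every reaction `(y, y') ∈ E`, the
complex `y` is reachable from `y'` under the reflexive-transitive closure of the relation
"there is a reaction in `E` from `a` to `b`". -/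
def WeaklyReversible {α : Type*} (E : Finset (α × α)) : Prop :=
  ∀ p ∈ E, Relation.ReflTransGen (fun a b => (a, b) ∈ E) p.2 p.1

/-- A decomposition of the reaction set `R`: a collection of nonempty pairwise disjoint
subsets of `R` whose union is `R`. -/
def IsDecompositionOf {α : Type*} [DecidableEq α] (R : Finset (α × α))
    (D : Finset (Finset (α × α))) : Prop :=
  (∀ E ∈ D, E.Nonempty) ∧ (D : Set (Finset (α × α))).PairwiseDisjoint id ∧ D.sup id = R

/-- The complexes occurring as a source or target of some reaction in `E`. -/
def complexesOf {α : Type*} [DecidableEq α] (E : Finset (α × α)) : Finset α :=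
  E.image Prod.fst ∪ E.image Prod.snd

/-- The undirected graph on the complexes occurring in `E`, with an edge between `y` and
`y'` whenever `(y, y') ∈ E` or `(y', y) ∈ E`. -/
def linkageGraph {α : Type*} [DecidableEq α] (E : Finset (α × α)) :
    SimpleGraph {x // x ∈ complexesOf E} where
  Adj a b := a ≠ b ∧ (((a : α), (b : α)) ∈ E ∨ ((b : α), (a : α)) ∈ E)
  symm := ⟨by rintro a b ⟨hne, h⟩; exact ⟨hne.symm, h.symm⟩⟩
  loopless := ⟨by rintro a ⟨hne, -⟩; exact hne rfl⟩

/-- The stoichiometric subspace of a set `E` of reactions: the span of the reaction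
vectors `y' - y` for `(y, y') ∈ E`. -/
def stoichSubspace {S : Type*} [Fintype S] (E : Finset ((S → ℝ) × (S → ℝ))) :
    Submodule ℝ (S → ℝ) :=
  Submodule.span ℝ ((fun p : (S → ℝ) × (S → ℝ) => p.2 - p.1) '' (E : Set _))

/-- The deficiency `δ(E) = n(E) - l(E) - s(E)` of a set `E` of reactions, where `n(E)` is
the number of complexes occurring in `E`, `l(E)` is the number of connected components of
the linkage graph of `E`, and `s(E)` is the dimension of the stoichiometric subspace. -/
noncomputable def deficiency {S : Type*} [Fintype S] [DecidableEq (S → ℝ)]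
    (E : Finset ((S → ℝ) × (S → ℝ))) : ℤ :=
  ((complexesOf E).card : ℤ) - (Nat.card (linkageGraph E).ConnectedComponent : ℤ) -
    (Module.finrank ℝ (stoichSubspace E) : ℤ)

/-- A decomposition is independent if the stoichiometric subspace of `R` is the internal
direct sum of the stoichiometric subspaces of the blocks. -/
def IsIndependentDecomposition {S : Type*} [Fintype S] [DecidableEq (S → ℝ)]
    (R : Finset ((S → ℝ) × (S → ℝ))) (D : Finset (Finset ((S → ℝ) × (S → ℝ)))) : Prop :=
  IsDecompositionOf R D ∧
    iSupIndep (fun E : {E // E ∈ D} => stoichSubspace (E : Finset ((S → ℝ) × (S → ℝ)))) ∧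
    (⨆ E : {E // E ∈ D}, stoichSubspace (E : Finset ((S → ℝ) × (S → ℝ)))) = stoichSubspace R

/-! ### Auxiliary lemmas -/

section Helpers
variable {α : Type*} [DecidableEq α]

lemma fst_mem_complexesOf {E : Finset (α × α)} {e : α × α} (he : e ∈ E) :
    e.1 ∈ complexesOf E :=
  Finset.mem_union_left _ (Finset.mem_image_of_mem _ he)

lemma snd_mem_complexesOf {E : Finset (α × α)} {e : α × α} (he : e ∈ E) :
    e.2 ∈ complexesOf E :=
  Finset.mem_union_right _ (Finset.mem_image_of_mem _ he)

/-- Sum over a subtype of an `ite` selecting a single element. -/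
lemma sum_subtype_ite {β : Type*} [AddCommMonoid β] {s : Finset α} {a : α} (ha : a ∈ s)
    (t : {x // x ∈ s} → β) :
    ∑ v : {x // x ∈ s}, (if (v : α) = a then t v else 0) = t ⟨a, ha⟩ := by
  have h : ∀ v : {x // x ∈ s}, ((v : α) = a) = (v = ⟨a, ha⟩) := fun v => by
    simp [Subtype.ext_iff]
  simp_rw [h]
  simp

lemma sum_filter_ite {s : Finset α} {a : α} (ha : a ∈ s) (Q : {x // x ∈ s} → Prop)
    [DecidablePred Q] :
    ∑ v ∈ Finset.univ.filter Q, (if (v : α) = a then (1:ℝ) else 0) =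
      if Q ⟨a, ha⟩ then (1:ℝ) else 0 := by
  rw [Finset.sum_filter]
  have h : ∀ v : {x // x ∈ s}, (if Q v then (if (v:α) = a then (1:ℝ) else 0) else 0)
      = if (v:α) = a then (if Q v then (1:ℝ) else 0) else 0 := fun v => by
    split_ifs <;> rfl
  simp_rw [h]
  exact sum_subtype_ite ha _

/-- The incidence vector of an edge, as a function on the complexes of `E`. -/
noncomputable def incVec (E : Finset (α × α)) (e : α × α) :
    {x // x ∈ complexesOf E} → ℝ :=
  fun v => (if (v : α) = e.2 then 1 else 0) - (if (v : α) = e.1 then 1 else 0)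

/-- The cut argument: a nonnegative circulation with positive flow on `(y, y')` yields a
directed path from `y'` back to `y`. -/
lemma path_of_circulation (E : Finset (α × α)) (c : α × α → ℕ)
    (hg : ∑ e ∈ E, (c e : ℝ) • incVec E e = 0)
    {y y' : α} (hyy : (y, y') ∈ E) (hc : c (y, y') ≠ 0) :
    Relation.ReflTransGen (fun a b => (a, b) ∈ E) y' y := by
  classical
  set P : α → Prop := fun v => Relation.ReflTransGen (fun a b => (a, b) ∈ E) v y with hP
  set T := Finset.univ.filter (fun v : {x // x ∈ complexesOf E} => P (v : α)) with hT
  have key : ∑ v ∈ T, (∑ e ∈ E, (c e : ℝ) • incVec E e) v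
      = ∑ e ∈ E, (c e : ℝ) *
        ((if P e.2 then (1:ℝ) else 0) - (if P e.1 then (1:ℝ) else 0)) := by
    simp only [Finset.sum_apply, Pi.smul_apply, smul_eq_mul]
    rw [Finset.sum_comm]
    refine Finset.sum_congr rfl fun e he => ?_
    rw [← Finset.mul_sum]
    congr 1
    unfold incVec
    rw [Finset.sum_sub_distrib]
    rw [sum_filter_ite (snd_mem_complexesOf he), sum_filter_ite (fst_mem_complexesOf he)]
  have h1 : ∑ e ∈ E, (c e : ℝ) *
      ((if P e.2 then (1:ℝ) else 0) - (if P e.1 then (1:ℝ) else 0)) = 0 := by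
    rw [← key, hg]; simp
  have hterm : ∀ e ∈ E, (c e : ℝ) *
      ((if P e.2 then (1:ℝ) else 0) - (if P e.1 then (1:ℝ) else 0)) ≤ 0 := by
    intro e he
    have himp : P e.2 → P e.1 := fun h2 => Relation.ReflTransGen.head he h2
    apply mul_nonpos_of_nonneg_of_nonpos (by positivity)
    split_ifs with h2 h1' h1'
    · simp
    · exact absurd (himp h2) h1'
    · norm_num
    · simp
  have hzero := (Finset.sum_eq_zero_iff_of_nonpos hterm).mp h1 (y, y') hyy
  have hPy : P y := Relation.ReflTransGen.refl
  simp only [if_pos hPy] at hzero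
  by_contra hny
  change ¬ P y' at hny
  rw [if_neg hny] at hzero
  simp at hzero
  exact hc hzero

lemma complexesOf_singleton (e : α × α) :
    complexesOf ({e} : Finset (α × α)) = {e.1, e.2} := by
  unfold complexesOf
  simp [Finset.image_singleton, Finset.union_comm]

lemma sup_singletons {β : Type*} [DecidableEq β] (s : Finset β) :
    (s.image fun e => ({e} : Finset β)).sup id = s := by
  ext a
  simp [Finset.mem_sup]

end Helpers

section LinAlg
variable {S : Type*} [Fintype S] [DecidableEq (S → ℝ)]

set_option linter.unusedSectionVars false

/-- The linear map sending a formal combination of complexes to its value in `ℝ^S`. -/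
noncomputable def Ymap (E : Finset ((S → ℝ) × (S → ℝ))) :
    ({x // x ∈ complexesOf E} → ℝ) →ₗ[ℝ] (S → ℝ) where
  toFun f := ∑ v : {x // x ∈ complexesOf E}, f v • (v : S → ℝ)
  map_add' f g := by simp [add_smul, Finset.sum_add_distrib]
  map_smul' r f := by simp [mul_smul, Finset.smul_sum]

lemma Ymap_incVec (E : Finset ((S → ℝ) × (S → ℝ))) {e : (S → ℝ) × (S → ℝ)} (he : e ∈ E) :
    Ymap E (incVec E e) = e.2 - e.1 := by
  show ∑ v : {x // x ∈ complexesOf E}, incVec E e v • (v : S → ℝ) = _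
  simp only [incVec]
  have : ∀ v : {x // x ∈ complexesOf E},
      ((if (v : S → ℝ) = e.2 then (1:ℝ) else 0) - (if (v : S → ℝ) = e.1 then 1 else 0)) • (v : S → ℝ)
      = (if (v : S → ℝ) = e.2 then (v : S → ℝ) else 0) - (if (v : S → ℝ) = e.1 then (v : S → ℝ) else 0) := by
    intro v; split_ifs <;> simp
  simp_rw [this]
  rw [Finset.sum_sub_distrib]
  rw [sum_subtype_ite (snd_mem_complexesOf he), sum_subtype_ite (fst_mem_complexesOf he)]

/-- Main linear-algebra step: if `E` has deficiency zero, then any nonnegative integer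
combination of reaction vectors summing to zero is in fact a circulation. -/
lemma circulation_of_stoich_zero (E : Finset ((S → ℝ) × (S → ℝ)))
    (hloopE : ∀ e ∈ E, e.1 ≠ e.2) (hdE : deficiency E = 0)
    (c : ((S → ℝ) × (S → ℝ)) → ℕ)
    (hsum : ∑ e ∈ E, (c e : ℝ) • (e.2 - e.1) = 0) :
    ∑ e ∈ E, (c e : ℝ) • incVec E e = 0 := by
  classical
  set G := linkageGraph E with hG
  haveI : Finite G.ConnectedComponent := Quot.finite _
  haveI : Fintype G.ConnectedComponent := Fintype.ofFinite _
  -- the component-summing map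
  set q : ({x // x ∈ complexesOf E} → ℝ) →ₗ[ℝ] (G.ConnectedComponent → ℝ) :=
    { toFun := fun f cc => ∑ v : {x // x ∈ complexesOf E}, (if G.connectedComponentMk v = cc then f v else 0)
      map_add' := fun f g => by
        funext cc
        simp only [Pi.add_apply]
        rw [← Finset.sum_add_distrib]
        exact Finset.sum_congr rfl fun v _ => by split_ifs <;> simp
      map_smul' := fun r f => by
        funext cc
        simp only [RingHom.id_apply, Pi.smul_apply, smul_eq_mul, Finset.mul_sum]
        exact Finset.sum_congr rfl fun v _ => by split_ifs <;> simp } with hq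
  -- q is surjective
  have hqsurj : Function.Surjective q := by
    intro h
    have hrep : ∀ cc : G.ConnectedComponent, ∃ v : {x // x ∈ complexesOf E}, G.connectedComponentMk v = cc :=
      fun cc => cc.exists_rep
    choose rep hrep using hrep
    refine ⟨fun v => if v = rep (G.connectedComponentMk v) then h (G.connectedComponentMk v) else 0, ?_⟩
    funext cc
    show ∑ v : {x // x ∈ complexesOf E}, _ = _
    dsimp only
    rw [Finset.sum_eq_single (rep cc)]
    · rw [if_pos (hrep cc), if_pos]
      · rw [hrep cc]
      · rw [hrep cc]
    · intro v _ hv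
      split_ifs with h1 h2
      · exact absurd (h2.trans (by rw [h1])) hv
      · rfl
      · rfl
    · intro h; exact absurd (Finset.mem_univ _) h
  -- the span of incidence vectors
  set W : Submodule ℝ ({x // x ∈ complexesOf E} → ℝ) := Submodule.span ℝ (incVec E '' (E : Set _)) with hW
  -- W is inside ker q
  have hWker : W ≤ LinearMap.ker q := by
    rw [hW, Submodule.span_le]
    rintro _ ⟨e, he, rfl⟩
    simp only [SetLike.mem_coe, LinearMap.mem_ker]
    funext cc
    show ∑ v : {x // x ∈ complexesOf E}, _ = _
    have hsplit : ∀ v : {x // x ∈ complexesOf E}, (if G.connectedComponentMk v = cc then incVec E e v else 0)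
        = (if (v : S → ℝ) = e.2 then (if G.connectedComponentMk v = cc then (1:ℝ) else 0) else 0)
          - (if (v : S → ℝ) = e.1 then (if G.connectedComponentMk v = cc then (1:ℝ) else 0) else 0) := by
      intro v; unfold incVec; split_ifs <;> simp
    simp_rw [hsplit]
    rw [Finset.sum_sub_distrib]
    rw [sum_subtype_ite (snd_mem_complexesOf he), sum_subtype_ite (fst_mem_complexesOf he)]
    have hadj : G.Adj ⟨e.1, fst_mem_complexesOf he⟩ ⟨e.2, snd_mem_complexesOf he⟩ := by
      refine ⟨?_, Or.inl ?_⟩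
      · simp only [ne_eq, Subtype.ext_iff]
        exact hloopE e he
      · exact he
    have hcomp : G.connectedComponentMk ⟨e.2, snd_mem_complexesOf he⟩
        = G.connectedComponentMk ⟨e.1, fst_mem_complexesOf he⟩ :=
      SimpleGraph.ConnectedComponent.sound hadj.symm.reachable
    rw [hcomp, sub_self, Pi.zero_apply]
  -- dimension bookkeeping
  have hrank : Module.finrank ℝ (LinearMap.ker q) + Nat.card G.ConnectedComponent
      = (complexesOf E).card := by
    have := LinearMap.finrank_range_add_finrank_ker q
    rw [LinearMap.range_eq_top.mpr hqsurj] at this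
    rw [Nat.card_eq_fintype_card]
    have h1 : Module.finrank ℝ (⊤ : Submodule ℝ (G.ConnectedComponent → ℝ))
        = Fintype.card G.ConnectedComponent := by
      rw [finrank_top, Module.finrank_pi]
    have h2 : Module.finrank ℝ ({x // x ∈ complexesOf E} → ℝ) = (complexesOf E).card := by
      rw [Module.finrank_pi, Fintype.card_coe]
    omega
  -- stoichSubspace E is the image of W under Ymap
  have hmap : Submodule.map (Ymap E) W = stoichSubspace E := by
    rw [hW, Submodule.map_span, ← Set.image_comp]
    unfold stoichSubspace
    congr 1
    exact Set.image_congr fun e he => Ymap_incVec E he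
  -- finrank of stoich from deficiency zero
  have hs : (Module.finrank ℝ (stoichSubspace E) : ℤ)
      = ((complexesOf E).card : ℤ) - (Nat.card G.ConnectedComponent : ℤ) := by
    unfold deficiency at hdE
    rw [← hG] at hdE
    omega
  have hWle : Module.finrank ℝ W ≤ Module.finrank ℝ (stoichSubspace E) := by
    have h1 : Module.finrank ℝ W ≤ Module.finrank ℝ (LinearMap.ker q) :=
      Submodule.finrank_mono hWker
    omega
  -- rank-nullity for the restriction of Ymap to W
  have hrn := LinearMap.finrank_range_add_finrank_ker ((Ymap E).domRestrict W)
  have hrange : LinearMap.range ((Ymap E).domRestrict W) = stoichSubspace E := by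
    rw [LinearMap.range_domRestrict]
    exact hmap
  rw [hrange] at hrn
  have hker0 : LinearMap.ker ((Ymap E).domRestrict W) = ⊥ := by
    rw [← Submodule.finrank_eq_zero (S := LinearMap.ker ((Ymap E).domRestrict W))]
    omega
  -- our combination lies in W
  set g : {x // x ∈ complexesOf E} → ℝ := ∑ e ∈ E, (c e : ℝ) • incVec E e with hgdef
  have hgW : g ∈ W := by
    apply Submodule.sum_mem
    intro e he
    exact Submodule.smul_mem _ _ (Submodule.subset_span ⟨e, he, rfl⟩)
  have hYg : Ymap E g = 0 := by
    rw [hgdef, map_sum]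
    rw [← hsum]
    refine Finset.sum_congr rfl fun e he => ?_
    rw [map_smul, Ymap_incVec E he]
  have : (⟨g, hgW⟩ : W) ∈ LinearMap.ker ((Ymap E).domRestrict W) := by
    simp only [LinearMap.mem_ker, LinearMap.domRestrict_apply]
    exact hYg
  rw [hker0, Submodule.mem_bot] at this
  exact congrArg Subtype.val this

/-- A single (non-loop) reaction has deficiency zero. -/
lemma deficiency_singleton (e : (S → ℝ) × (S → ℝ)) (hne : e.1 ≠ e.2) :
    deficiency ({e} : Finset ((S → ℝ) × (S → ℝ))) = 0 := by
  have hcx := complexesOf_singleton e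
  have hn : (complexesOf ({e} : Finset ((S → ℝ) × (S → ℝ)))).card = 2 := by
    rw [hcx]; exact Finset.card_pair hne
  have h1 : e.1 ∈ complexesOf ({e} : Finset ((S → ℝ) × (S → ℝ))) := by
    rw [hcx]; simp
  have h2 : e.2 ∈ complexesOf ({e} : Finset ((S → ℝ) × (S → ℝ))) := by
    rw [hcx]; simp
  set G := linkageGraph ({e} : Finset ((S → ℝ) × (S → ℝ))) with hG
  have hadj : G.Adj ⟨e.1, h1⟩ ⟨e.2, h2⟩ := by
    refine ⟨by simpa [Subtype.ext_iff] using hne, Or.inl ?_⟩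
    exact Finset.mem_singleton_self e
  have hreach : ∀ v w : {x // x ∈ complexesOf ({e} : Finset ((S → ℝ) × (S → ℝ)))},
      G.Reachable v w := by
    have hcases : ∀ v : {x // x ∈ complexesOf ({e} : Finset ((S → ℝ) × (S → ℝ)))},
        v = ⟨e.1, h1⟩ ∨ v = ⟨e.2, h2⟩ := by
      rintro ⟨v, hv⟩
      rw [hcx] at hv
      rcases Finset.mem_insert.mp hv with h | h
      · left; exact Subtype.ext h
      · right; exact Subtype.ext (Finset.mem_singleton.mp h)
    intro v w
    rcases hcases v with rfl | rfl <;> rcases hcases w with rfl | rfl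
    · rfl
    · exact hadj.reachable
    · exact hadj.symm.reachable
    · rfl
  have hl : Nat.card G.ConnectedComponent = 1 := by
    rw [Nat.card_eq_one_iff_unique]
    constructor
    · constructor
      intro c1 c2
      obtain ⟨v, rfl⟩ := c1.exists_rep
      obtain ⟨w, rfl⟩ := c2.exists_rep
      exact SimpleGraph.ConnectedComponent.sound (hreach v w)
    · exact ⟨G.connectedComponentMk ⟨e.1, h1⟩⟩
  have hs : Module.finrank ℝ (stoichSubspace ({e} : Finset ((S → ℝ) × (S → ℝ)))) = 1 := by
    unfold stoichSubspace
    rw [Finset.coe_singleton, Set.image_singleton]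
    exact finrank_span_singleton (sub_ne_zero.mpr (Ne.symm hne))
  unfold deficiency
  rw [hn, ← hG, hl, hs]
  ring

/-- Coefficients of a path: a path from `a` to `b` gives a nonnegative integer combination
of reaction vectors summing to `b - a`. -/
lemma exists_path_coeff (R : Finset ((S → ℝ) × (S → ℝ))) {a b : S → ℝ}
    (h : Relation.ReflTransGen (fun u v => (u, v) ∈ R) a b) :
    ∃ c : ((S → ℝ) × (S → ℝ)) → ℕ, ∑ e ∈ R, (c e : ℝ) • (e.2 - e.1) = b - a := by
  classical
  induction h with
  | refl => exact ⟨fun _ => 0, by simp⟩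
  | @tail b' z hab hbz ih =>
    obtain ⟨c, hc⟩ := ih
    refine ⟨fun e => c e + (if e = (b', z) then 1 else 0), ?_⟩
    have hsplit : ∀ e ∈ R, (((c e + (if e = (b', z) then 1 else 0) : ℕ)) : ℝ) • (e.2 - e.1)
        = (c e : ℝ) • (e.2 - e.1) + (if e = (b', z) then (e.2 - e.1) else 0) := by
      intro e _
      push_cast
      rw [add_smul]
      congr 1
      split_ifs <;> simp
    rw [Finset.sum_congr rfl hsplit, Finset.sum_add_distrib, hc,
      Finset.sum_ite_eq' R (b', z), if_pos hbz]
    abel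

end LinAlg

/-- If `R` is weakly reversible and the deficiency is additive over every decomposition of
`R`, then every independent decomposition of `R` is weakly reversible. -/
theorem independentDecomposition_weaklyReversible_of_deficiency_additive
    {S : Type*} [Fintype S] [DecidableEq (S → ℝ)]
    (C : Finset (S → ℝ)) (R : Finset ((S → ℝ) × (S → ℝ)))
    (hRC : ∀ p ∈ R, p.1 ∈ C ∧ p.2 ∈ C)
    (hloop : ∀ y : S → ℝ, (y, y) ∉ R)
    (hWR : WeaklyReversible R)
    (hdef : ∀ D : Finset (Finset ((S → ℝ) × (S → ℝ))), IsDecompositionOf R D →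
      deficiency R = ∑ E ∈ D, deficiency E) :
    ∀ D : Finset (Finset ((S → ℝ) × (S → ℝ))), IsIndependentDecomposition R D →
      ∀ E ∈ D, WeaklyReversible E := by
  classical
  intro D hD E hE
  obtain ⟨⟨hblkne, hdisj, hsup⟩, hInd, _⟩ := hD
  have hER : E ⊆ R := by
    rw [← hsup]
    exact Finset.le_sup (f := id) hE
  have hloopR : ∀ e ∈ R, e.1 ≠ e.2 := by
    intro e he h12
    apply hloop e.1
    have : e = (e.1, e.1) := by rw [← Prod.mk.eta (p := e), ← h12]
    rwa [← this]
  -- deficiency of R is zero (decomposition into singletons)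
  have hsingle_inj : ∀ (s : Finset ((S → ℝ) × (S → ℝ))),
      Set.InjOn (fun e => ({e} : Finset ((S → ℝ) × (S → ℝ)))) s := by
    intro s a _ b _ h
    exact Finset.singleton_injective h
  have hD1 : IsDecompositionOf R (R.image fun e => ({e} : Finset _)) := by
    refine ⟨?_, ?_, ?_⟩
    · intro F hF
      obtain ⟨a, _, rfl⟩ := Finset.mem_image.mp hF
      exact Finset.singleton_nonempty a
    · intro x hx y hy hxy
      simp only [Finset.coe_image, Set.mem_image, Finset.mem_coe] at hx hy
      obtain ⟨a, _, rfl⟩ := hx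
      obtain ⟨b, _, rfl⟩ := hy
      exact Finset.disjoint_singleton.mpr fun h => hxy (by rw [h])
    · exact sup_singletons R
  have hδR : deficiency R = 0 := by
    have h := hdef _ hD1
    rw [Finset.sum_image (fun a ha b hb hab => hsingle_inj R ha hb hab)] at h
    rw [h]
    exact Finset.sum_eq_zero fun e he => deficiency_singleton e (hloopR e he)
  -- deficiency of the block E is zero
  have hEnotin : E ∉ (R \ E).image (fun e => ({e} : Finset ((S → ℝ) × (S → ℝ)))) := by
    intro h
    obtain ⟨a, ha, hae⟩ := Finset.mem_image.mp h
    have : a ∈ E := by rw [← hae]; exact Finset.mem_singleton_self a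
    exact (Finset.mem_sdiff.mp ha).2 this
  have hD2 : IsDecompositionOf R
      (insert E ((R \ E).image fun e => ({e} : Finset _))) := by
    refine ⟨?_, ?_, ?_⟩
    · intro F hF
      rcases Finset.mem_insert.mp hF with rfl | hF
      · exact hblkne F hE
      · obtain ⟨a, _, rfl⟩ := Finset.mem_image.mp hF
        exact Finset.singleton_nonempty a
    · intro x hx y hy hxy
      simp only [Finset.coe_insert, Set.mem_insert_iff, Finset.coe_image, Set.mem_image,
        Finset.mem_coe] at hx hy
      have hdE : ∀ a ∈ R \ E, Disjoint E ({a} : Finset ((S → ℝ) × (S → ℝ))) := by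
        intro a ha
        exact Finset.disjoint_singleton_right.mpr (Finset.mem_sdiff.mp ha).2
      rcases hx with rfl | ⟨a, ha, rfl⟩ <;> rcases hy with rfl | ⟨b, hb, rfl⟩
      · exact absurd rfl hxy
      · exact hdE b hb
      · exact (hdE a ha).symm
      · exact Finset.disjoint_singleton.mpr fun h => hxy (by rw [h])
    · rw [Finset.sup_insert, sup_singletons]
      exact Finset.union_sdiff_of_subset hER
  have hδE : deficiency E = 0 := by
    have h := hdef _ hD2
    rw [Finset.sum_insert hEnotin,
      Finset.sum_image (fun a ha b hb hab => hsingle_inj _ ha hb hab)] at h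
    have hz : ∑ e ∈ R \ E, deficiency ({e} : Finset ((S → ℝ) × (S → ℝ))) = 0 :=
      Finset.sum_eq_zero fun e he =>
        deficiency_singleton e (hloopR e (Finset.mem_sdiff.mp he).1)
    rw [hz, hδR] at h
    omega
  -- now prove weak reversibility of E
  intro p hp
  obtain ⟨y, y'⟩ := p
  dsimp only
  have hpR : (y, y') ∈ R := hER hp
  obtain ⟨c', hc'⟩ := exists_path_coeff R (hWR (y, y') hpR)
  dsimp only at hc'
  set c : ((S → ℝ) × (S → ℝ)) → ℕ := fun e => c' e + (if e = (y, y') then 1 else 0)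
    with hcdef
  have hctot : ∑ e ∈ R, (c e : ℝ) • (e.2 - e.1) = 0 := by
    have hsplit : ∀ e ∈ R, ((c e : ℕ) : ℝ) • (e.2 - e.1)
        = (c' e : ℝ) • (e.2 - e.1) + (if e = (y, y') then (e.2 - e.1) else 0) := by
      intro e _
      rw [hcdef]
      push_cast
      rw [add_smul]
      congr 1
      split_ifs <;> simp
    rw [Finset.sum_congr rfl hsplit, Finset.sum_add_distrib, hc',
      Finset.sum_ite_eq' R (y, y'), if_pos hpR]
    abel
  -- blockwise sums
  have hblocks : ∑ F ∈ D, (∑ e ∈ F, (c e : ℝ) • (e.2 - e.1)) = 0 := by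
    rw [← hctot, ← hsup, Finset.sup_eq_biUnion, Finset.sum_biUnion hdisj]
    rfl
  -- independence kills the block sum in E
  have hvE : ∑ e ∈ E, (c e : ℝ) • (e.2 - e.1) = 0 := by
    set i0 : {F // F ∈ D} := ⟨E, hE⟩ with hi0
    set vF : Finset ((S → ℝ) × (S → ℝ)) → (S → ℝ) :=
      fun F => ∑ e ∈ F, (c e : ℝ) • (e.2 - e.1) with hvF
    have hsubsum : ∑ i : {F // F ∈ D}, vF (i : Finset _) = 0 := by
      rw [Finset.sum_coe_sort D vF]
      exact hblocks
    have hmemF : ∀ F : Finset ((S → ℝ) × (S → ℝ)), vF F ∈ stoichSubspace F := by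
      intro F
      exact Submodule.sum_mem _ fun e he =>
        Submodule.smul_mem _ _ (Submodule.subset_span ⟨e, he, rfl⟩)
    have hrest : vF E = - ∑ i ∈ Finset.univ.erase i0, vF (i : Finset _) := by
      apply eq_neg_of_add_eq_zero_left
      have h := Finset.add_sum_erase Finset.univ
        (fun i : {F // F ∈ D} => vF (i : Finset _)) (Finset.mem_univ i0)
      exact h.trans hsubsum
    have hmem2 : ∑ i ∈ Finset.univ.erase i0, vF (i : Finset _) ∈
        ⨆ j ≠ i0, stoichSubspace ((j : {F // F ∈ D}) : Finset _) := by
      apply Submodule.sum_mem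
      intro i hi
      have hine : i ≠ i0 := (Finset.mem_erase.mp hi).1
      exact Submodule.mem_iSup_of_mem i (Submodule.mem_iSup_of_mem hine (hmemF _))
    have hd := hInd i0
    have := Submodule.disjoint_def.mp hd (vF E) (hmemF E)
      (by rw [hrest]; exact neg_mem hmem2)
    exact this
  -- conclude via circulation and the cut argument
  have hloopE : ∀ e ∈ E, e.1 ≠ e.2 := fun e he => hloopR e (hER he)
  have hcirc := circulation_of_stoich_zero E hloopE hδE c hvE
  have hcpos : c (y, y') ≠ 0 := by simp [hcdef]
  exact path_of_circulation E c hcirc hp hcpos
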